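/- arXiv:1912.00549 — 11 statements merged into one kernel-verified Lean document; each statement's English description precedes it below -/
import Mathlib

section
/- Let α : ℕ → {0,1} be a schedule satisfying SLA (C,T), i.e., for every Q ≥ 0, the sum α(QT) + ... + α(QT + T − 1) ≥ C. If T ≤ T'/2, K = ⌊T'/T⌋, and (K−1)·C ≥ C', then α satisfies SLA (C',T'), i.e., for every Q' ≥ 0, α(Q'T') + ... + α(Q'T' + T' − 1) ≥ C'. -/
/-- α satisfies SLA (C,T): in every aligned interval of length T the allocation is ≥ C. -/
def Sat (C T : ℕ) (α : ℕ → ℕ) : Prop :=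
  ∀ Q : ℕ, C ≤ ∑ i ∈ Finset.range T, α (Q * T + i)

lemma blocks_sum (f : ℕ → ℕ) (T m : ℕ) :
    ∀ k : ℕ, ∑ j ∈ Finset.range k, ∑ i ∈ Finset.range T, f ((m + j) * T + i)
      = ∑ n ∈ Finset.Ico (m * T) ((m + k) * T), f n := by
  intro k
  induction k with
  | zero => simp
  | succ k ih =>
    rw [Finset.sum_range_succ, ih,
      ← Finset.sum_Ico_consecutive f (by nlinarith : m * T ≤ (m + k) * T)
        (by nlinarith : (m + k) * T ≤ (m + (k + 1)) * T)]
    congr 1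
    rw [Finset.sum_Ico_eq_sum_range]
    have : (m + (k + 1)) * T - (m + k) * T = T := by ring_nf; omega
    rw [this]

theorem stmt_1 (C T C' T' K : ℕ) (α : ℕ → ℕ) (hbin : ∀ n, α n ≤ 1)
    (hCT : C ≤ T) (hT : 1 ≤ T) (hT' : 1 ≤ T')
    (hhalf : T ≤ T' / 2) (hK : K = T' / T) (hC : C' ≤ (K - 1) * C)
    (hsat : Sat C T α) : Sat C' T' α := by
  intro Q'
  set a := Q' * T' with ha
  set m := a / T + 1 with hm
  have hmT : a ≤ m * T := by
    calc a = T * (a / T) + a % T := (Nat.div_add_mod a T).symm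
      _ ≤ T * (a / T) + T := Nat.add_le_add_left (Nat.mod_lt a hT).le _
      _ = m * T := by rw [hm]; ring
  have hmT2 : m * T ≤ a + T := by
    calc m * T = a / T * T + T := by rw [hm]; ring
      _ ≤ a + T := Nat.add_le_add_right (Nat.div_mul_le_self a T) _
  have hKT : K * T ≤ T' := by rw [hK]; exact Nat.div_mul_le_self T' T
  have hK1 : 1 ≤ K := by
    rw [hK]
    have h2 : 2 * T ≤ T' := by
      have := Nat.div_mul_le_self T' 2
      omega
    exact Nat.one_le_div_iff hT |>.mpr (by omega)
  have hend : (m + (K - 1)) * T ≤ a + T' := by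
    obtain ⟨k, rfl⟩ : ∃ k, K = k + 1 := ⟨K - 1, by omega⟩
    calc (m + (k + 1 - 1)) * T = m * T + k * T := by
          simp [add_mul]
      _ ≤ (a + T) + k * T := Nat.add_le_add_right hmT2 _
      _ = a + (k + 1) * T := by ring
      _ ≤ a + T' := Nat.add_le_add_left hKT _
  calc C' ≤ (K - 1) * C := hC
    _ ≤ ∑ j ∈ Finset.range (K - 1), ∑ i ∈ Finset.range T, α ((m + j) * T + i) := by
        have : (K - 1) * C = ∑ _j ∈ Finset.range (K - 1), C := by
          simp [Finset.sum_const, mul_comm]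
        rw [this]
        exact Finset.sum_le_sum fun j _ => hsat (m + j)
    _ = ∑ n ∈ Finset.Ico (m * T) ((m + (K - 1)) * T), α n := blocks_sum α T m (K - 1)
    _ ≤ ∑ n ∈ Finset.Ico a (a + T'), α n := by
        apply Finset.sum_le_sum_of_subset
        apply Finset.Ico_subset_Ico hmT hend
    _ = ∑ i ∈ Finset.range T', α (a + i) := by
        rw [Finset.sum_Ico_eq_sum_range]; simp
end

section
/- Let α : ℕ → {0,1} be a schedule satisfying SLA (C,T). If T > T' and C ≥ T − (T' − C')/2 (equivalently 2C + T' − 2T ≥ C'), then α satisfies SLA (C',T'). -/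
/-- if T > T' and 2C + T' − 2T ≥ C', then Sat (C,T) implies Sat (C',T'). -/
theorem stmt_2 (C T C' T' : ℕ) (α : ℕ → ℕ) (hbin : ∀ n, α n ≤ 1)
    (hCT : C ≤ T) (hC'T' : C' ≤ T') (hT : 1 ≤ T) (hT' : 1 ≤ T')
    (hTT' : T' < T) (hC : 2 * T + C' ≤ 2 * C + T')
    (hsat : Sat C T α) : Sat C' T' α := by
  intro Q
  set a := Q * T' with ha
  set q := a / T with hq
  have hkey : ∀ b : ℕ, C ≤ ∑ j ∈ Finset.Ico (b * T) (b * T + T), α j := by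
    intro b
    rw [Finset.sum_Ico_eq_sum_range]
    simpa using hsat b
  -- the big interval of two consecutive T-blocks
  have hbig : 2 * C ≤ ∑ j ∈ Finset.Ico (q * T) (q * T + 2 * T), α j := by
    have hcons := Finset.sum_Ico_consecutive α
      (show q * T ≤ q * T + T by omega)
      (show q * T + T ≤ q * T + 2 * T by omega)
    have h1 := hkey q
    have h2 := hkey (q + 1)
    rw [show (q + 1) * T = q * T + T from by ring,
        show q * T + T + T = q * T + 2 * T from by ring] at h2
    omega
  -- the window is inside the big interval
  have hmod : q * T + a % T = a := by
    rw [hq, Nat.mul_comm]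
    exact Nat.div_add_mod a T
  have hmodlt : a % T < T := Nat.mod_lt _ (by omega)
  have h1 : q * T ≤ a := by omega
  have h2 : a + T' ≤ q * T + 2 * T := by omega
  have hsub : Finset.Ico a (a + T') ⊆ Finset.Ico (q * T) (q * T + 2 * T) := by
    apply Finset.Ico_subset_Ico h1 h2
  have hsplit : ∑ j ∈ Finset.Ico (q * T) (q * T + 2 * T) \ Finset.Ico a (a + T'), α j
      + ∑ j ∈ Finset.Ico a (a + T'), α j
      = ∑ j ∈ Finset.Ico (q * T) (q * T + 2 * T), α j :=
    Finset.sum_sdiff hsub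
  have hout : ∑ j ∈ Finset.Ico (q * T) (q * T + 2 * T) \ Finset.Ico a (a + T'), α j
      ≤ 2 * T - T' := by
    calc ∑ j ∈ Finset.Ico (q * T) (q * T + 2 * T) \ Finset.Ico a (a + T'), α j
        ≤ ∑ _j ∈ Finset.Ico (q * T) (q * T + 2 * T) \ Finset.Ico a (a + T'), 1 :=
          Finset.sum_le_sum (fun j _ => hbin j)
      _ = (Finset.Ico (q * T) (q * T + 2 * T) \ Finset.Ico a (a + T')).card := by
          simp
      _ = 2 * T - T' := by
          rw [Finset.card_sdiff_of_subset hsub, Nat.card_Ico, Nat.card_Ico]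
          omega
  have hwin : ∑ j ∈ Finset.Ico a (a + T'), α j
      = ∑ i ∈ Finset.range T', α (a + i) := by
    rw [Finset.sum_Ico_eq_sum_range]
    simp
  omega
end

section
/- Let α : ℕ → {0,1} be a schedule satisfying SLA (C,T). If T'/2 < T ≤ T' and C ≥ T − (T' − C')/3 (equivalently 3C + T' − 3T ≥ C'), then α satisfies SLA (C',T'). -/
/-- if T'/2 < T ≤ T' and 3C + T' − 3T ≥ C', then Sat (C,T) implies Sat (C',T'). -/
theorem stmt_3 (C T C' T' : ℕ) (α : ℕ → ℕ) (hbin : ∀ n, α n ≤ 1)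
    (hCT : C ≤ T) (hC'T' : C' ≤ T') (hT : 1 ≤ T) (hT' : 1 ≤ T')
    (hlow : T' < 2 * T) (hhigh : T ≤ T') (hC : 3 * T + C' ≤ 3 * C + T')
    (hsat : Sat C T α) : Sat C' T' α := by
  intro Q
  set a := Q * T' with ha
  set k := a / T with hk
  have hTpos : 0 < T := hT
  have hka : k * T ≤ a := Nat.div_mul_le_self a T
  have hak : a < k * T + T := by
    have h1 := Nat.div_add_mod a T
    have h2 := Nat.mod_lt a hTpos
    have h3 : k * T = T * (a / T) := by rw [hk, Nat.mul_comm]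
    omega
  -- aligned window sums
  have hwin : ∀ q : ℕ, C ≤ ∑ x ∈ Finset.Ico (q * T) (q * T + T), α x := by
    intro q
    rw [Finset.sum_Ico_eq_sum_range]
    simpa using hsat q
  -- bounds for covering interval
  have h1 : k * T ≤ a := hka
  have h2 : a ≤ a + T' := Nat.le_add_right _ _
  have h3 : a + T' ≤ k * T + 3 * T := by omega
  -- split big interval
  have hsplit : (∑ x ∈ Finset.Ico (k * T) a, α x) + (∑ x ∈ Finset.Ico a (a + T') , α x)
      + (∑ x ∈ Finset.Ico (a + T') (k * T + 3 * T), α x)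
      = ∑ x ∈ Finset.Ico (k * T) (k * T + 3 * T), α x := by
    rw [Finset.sum_Ico_consecutive _ h1 h2, Finset.sum_Ico_consecutive _ (le_trans h1 h2) h3]
  -- big interval is three windows
  have hbig : 3 * C ≤ ∑ x ∈ Finset.Ico (k * T) (k * T + 3 * T), α x := by
    have e1 : (∑ x ∈ Finset.Ico (k * T) (k * T + T), α x)
        + (∑ x ∈ Finset.Ico (k * T + T) (k * T + 2 * T), α x)
        + (∑ x ∈ Finset.Ico (k * T + 2 * T) (k * T + 3 * T), α x)
        = ∑ x ∈ Finset.Ico (k * T) (k * T + 3 * T), α x := by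
      rw [Finset.sum_Ico_consecutive _ (by omega) (by omega : k * T + T ≤ k * T + 2 * T),
        Finset.sum_Ico_consecutive _ (by omega) (by omega : k * T + 2 * T ≤ k * T + 3 * T)]
    have w1 := hwin k
    have w2 := hwin (k + 1)
    have w3 := hwin (k + 2)
    have r2 : (k + 1) * T = k * T + T := by ring
    have r2' : k * T + T + T = k * T + 2 * T := by ring
    have r3 : (k + 2) * T = k * T + 2 * T := by ring
    have r3' : k * T + 2 * T + T = k * T + 3 * T := by ring
    rw [r2] at w2; rw [r2'] at w2
    rw [r3] at w3; rw [r3'] at w3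
    omega
  -- side sums bounded by cardinalities
  have hside1 : (∑ x ∈ Finset.Ico (k * T) a, α x) ≤ a - k * T := by
    calc (∑ x ∈ Finset.Ico (k * T) a, α x) ≤ ∑ x ∈ Finset.Ico (k * T) a, 1 :=
      Finset.sum_le_sum fun i _ => hbin i
    _ = a - k * T := by simp
  have hside2 : (∑ x ∈ Finset.Ico (a + T') (k * T + 3 * T), α x) ≤ k * T + 3 * T - (a + T') := by
    calc (∑ x ∈ Finset.Ico (a + T') (k * T + 3 * T), α x)
        ≤ ∑ x ∈ Finset.Ico (a + T') (k * T + 3 * T), 1 :=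
      Finset.sum_le_sum fun i _ => hbin i
    _ = k * T + 3 * T - (a + T') := by simp
  have hgoal : C' ≤ ∑ x ∈ Finset.Ico a (a + T'), α x := by omega
  calc C' ≤ ∑ x ∈ Finset.Ico a (a + T'), α x := hgoal
  _ = ∑ i ∈ Finset.range T', α (a + i) := by
      rw [Finset.sum_Ico_eq_sum_range]; simp
end

section
/- For any K ≥ 1, every schedule satisfying SLA (C,T) also satisfies SLA (K·C, K·T); that is, (C,T) is a subtype of (KC, KT). -/
/-- (C,T) is a subtype of (K·C, K·T) for any K ≥ 1. -/
theorem stmt_4 (C T K : ℕ) (hCT : C ≤ T) (hT : 1 ≤ T) (hK : 1 ≤ K) :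
    ∀ α : ℕ → ℕ, (∀ n, α n ≤ 1) → Sat C T α → Sat (K * C) (K * T) α := by
  intro α _ hsat
  have aux : ∀ (k Q : ℕ), k * C ≤ ∑ i ∈ Finset.range (k * T), α (Q * T + i) := by
    intro k
    induction k with
    | zero => simp
    | succ n ih =>
      intro Q
      rw [Nat.succ_mul, Nat.succ_mul, Finset.sum_range_add]
      have h2 : C ≤ ∑ i ∈ Finset.range T, α (Q * T + (n * T + i)) := by
        have := hsat (Q + n)
        simpa [add_mul, add_assoc] using this
      exact add_le_add (ih Q) h2
  intro Q
  have := aux K (Q * K)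
  simpa [mul_assoc, mul_comm T K] using this
end

section
/- Let T' = K·T with K > 1 and let J ∈ {1,...,K−1}. If C' ≥ K·(C−1) + (J−1)·(T − (C−1)) + 1, then for every schedule α satisfying SLA (C',T') and every multiple m of T', at least J of the K subintervals [m+jT, m+(j+1)T−1], j = 0,...,K−1, receive at least C allocation units (i.e., the number of missed T-intervals per window of K intervals is at most K−J). -/
lemma sum_range_mul (g : ℕ → ℕ) (K T : ℕ) :
    ∑ i ∈ Finset.range (K * T), g i
      = ∑ j ∈ Finset.range K, ∑ i ∈ Finset.range T, g (j * T + i) := by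
  induction K with
  | zero => simp
  | succ k ih =>
    rw [Nat.succ_mul, Finset.sum_range_add, ih, Finset.sum_range_succ]

/-- with T' = K·T, 1 ≤ J ≤ K−1 and
C' ≥ K·(C−1) + (J−1)·(T−(C−1)) + 1, at least J of the K subintervals of each
aligned window of length K·T are satisfied (receive ≥ C units). -/
theorem stmt_6 (C T C' K J : ℕ) (α : ℕ → ℕ) (hbin : ∀ n, α n ≤ 1)
    (hC1 : 1 ≤ C) (hCT : C ≤ T) (hK : 1 < K) (hJ1 : 1 ≤ J) (hJK : J ≤ K - 1)
    (hC' : K * (C - 1) + (J - 1) * (T - (C - 1)) + 1 ≤ C')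
    (hsat : Sat C' (K * T) α) :
    ∀ Q : ℕ, J ≤ ((Finset.range K).filter
      (fun j => C ≤ ∑ i ∈ Finset.range T, α (Q * (K * T) + j * T + i))).card := by
  intro Q
  by_contra h
  push_neg at h
  set f : ℕ → ℕ := fun j => ∑ i ∈ Finset.range T, α (Q * (K * T) + j * T + i) with hf
  have hsum : C' ≤ ∑ j ∈ Finset.range K, f j := by
    have := hsat Q
    rw [sum_range_mul (fun i => α (Q * (K * T) + i)) K T] at this
    simpa [hf, add_assoc] using this
  set A := (Finset.range K).filter (fun j => C ≤ f j) with hA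
  set s := A.card with hs
  have hsK : s ≤ K := le_trans (Finset.card_filter_le _ _) (by simp)
  have hcards : ((Finset.range K).filter (fun j => ¬ C ≤ f j)).card = K - s := by
    have := Finset.card_filter_add_card_filter_not
      (s := Finset.range K) (p := fun j => C ≤ f j)
    simp only [Finset.card_range, not_le] at this
    simp only [not_le]
    rw [hs, hA]
    omega
  have hsplit : ∑ j ∈ Finset.range K, f j
      = ∑ j ∈ A, f j + ∑ j ∈ (Finset.range K).filter (fun j => ¬ C ≤ f j), f j :=
    (Finset.sum_filter_add_sum_filter_not _ _ _).symm
  have hfT : ∀ j, f j ≤ T := by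
    intro j
    calc f j ≤ ∑ i ∈ Finset.range T, 1 := Finset.sum_le_sum (fun i _ => hbin _)
    _ = T := by simp
  have h1 : ∑ j ∈ A, f j ≤ s * T := by
    calc ∑ j ∈ A, f j ≤ ∑ j ∈ A, T := Finset.sum_le_sum (fun j _ => hfT j)
    _ = s * T := by simp [hs, mul_comm]
  have h2 : ∑ j ∈ (Finset.range K).filter (fun j => ¬ C ≤ f j), f j ≤ (K - s) * (C - 1) := by
    calc ∑ j ∈ (Finset.range K).filter (fun j => ¬ C ≤ f j), f j
        ≤ ∑ j ∈ (Finset.range K).filter (fun j => ¬ C ≤ f j), (C - 1) := by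
          apply Finset.sum_le_sum
          intro j hj
          have := (Finset.mem_filter.mp hj).2
          omega
    _ = (K - s) * (C - 1) := by rw [Finset.sum_const, hcards, smul_eq_mul]
  have key : s * T + (K - s) * (C - 1) = K * (C - 1) + s * (T - (C - 1)) := by
    have hT : T = (C - 1) + (T - (C - 1)) := by omega
    calc s * T + (K - s) * (C - 1)
        = s * (C - 1) + s * (T - (C - 1)) + (K - s) * (C - 1) := by
          conv_lhs => rw [hT]
          ring
    _ = (s + (K - s)) * (C - 1) + s * (T - (C - 1)) := by ring
    _ = K * (C - 1) + s * (T - (C - 1)) := by rw [Nat.add_sub_cancel' hsK]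
  have hsJ : s * (T - (C - 1)) ≤ (J - 1) * (T - (C - 1)) :=
    Nat.mul_le_mul_right _ (by omega)
  omega
end

section
/- Let T' = K·T with K > 1. If C' ≥ K·(C−1) + (K−1)·(T − (C−1)) + 1 (equivalently C' ≥ C + (K−1)·T), then every schedule satisfying SLA (C',T') satisfies SLA (C,T) restricted to windows aligned with T': for every multiple m of T' and every j ∈ {0,...,K−1}, the sum of α over [m+jT, m+(j+1)T−1] is at least C. -/
lemma sum_range_mul_split (f : ℕ → ℕ) (K T : ℕ) :
    ∑ i ∈ Finset.range (K * T), f i =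
      ∑ j ∈ Finset.range K, ∑ i ∈ Finset.range T, f (j * T + i) := by
  induction K with
  | zero => simp
  | succ k ih =>
      rw [Nat.succ_mul, Finset.sum_range_add, ih, Finset.sum_range_succ]

/-- with T' = K·T and C' ≥ C + (K−1)·T, every schedule satisfying
(C',T') satisfies (C,T) on all T-subintervals of windows aligned with T'. -/
theorem stmt_7 (C T C' K : ℕ) (α : ℕ → ℕ) (hbin : ∀ n, α n ≤ 1)
    (hC1 : 1 ≤ C) (hCT : C ≤ T) (hK : 1 < K) (hC'T' : C' ≤ K * T)
    (hC' : K * (C - 1) + (K - 1) * (T - (C - 1)) + 1 ≤ C')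
    (hsat : Sat C' (K * T) α) :
    ∀ Q : ℕ, ∀ j < K, C ≤ ∑ i ∈ Finset.range T, α (Q * (K * T) + j * T + i) := by
  intro Q j hj
  set S : ℕ → ℕ := fun j => ∑ i ∈ Finset.range T, α (Q * (K * T) + j * T + i) with hS
  have htot : C' ≤ ∑ j ∈ Finset.range K, S j := by
    have := hsat Q
    rw [sum_range_mul_split (fun i => α (Q * (K * T) + i)) K T] at this
    simpa only [← add_assoc] using this
  have hsplit : S j + ∑ j' ∈ (Finset.range K).erase j, S j' = ∑ j' ∈ Finset.range K, S j' :=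
    Finset.add_sum_erase _ S (Finset.mem_range.mpr hj)
  have hbound : ∑ j' ∈ (Finset.range K).erase j, S j' ≤ (K - 1) * T := by
    calc ∑ j' ∈ (Finset.range K).erase j, S j'
        ≤ ∑ j' ∈ (Finset.range K).erase j, T := by
          apply Finset.sum_le_sum
          intro k _
          calc S k ≤ ∑ i ∈ Finset.range T, 1 := Finset.sum_le_sum (fun i _ => hbin _)
            _ = T := by simp
      _ = (K - 1) * T := by
          rw [Finset.sum_const, Finset.card_erase_of_mem (Finset.mem_range.mpr hj),
            Finset.card_range, smul_eq_mul]
  -- arithmetic: C + (K-1)*T ≤ C'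
  have harith : C + (K - 1) * T ≤ C' := by
    obtain ⟨k, rfl⟩ : ∃ k, K = k + 1 := ⟨K - 1, by omega⟩
    obtain ⟨a, rfl⟩ : ∃ a, C = a + 1 := ⟨C - 1, by omega⟩
    obtain ⟨b, rfl⟩ : ∃ b, T = a + 1 + b := ⟨T - (a + 1), by omega⟩
    simp only [Nat.add_sub_cancel] at hC' ⊢
    have h1 : a + 1 + b - a = 1 + b := by omega
    rw [h1] at hC'
    nlinarith [hC']
  have : C ≤ S j := by omega
  exact this
end

section
/- Let α be a schedule satisfying SLA (C,T') with (T+C)/2 < T' < T and C ≤ T'. Then among any C+1 consecutive intervals of length T (aligned to multiples of T), at least one interval receives at least C allocation units; equivalently, α cannot have C+1 consecutive unsatisfied T-intervals. -/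
/-- with (T+C)/2 < T' < T and C ≤ T', among any C+1 consecutive
aligned T-intervals at least one receives at least C allocation units. -/
theorem stmt_9 (C T T' : ℕ) (α : ℕ → ℕ) (hbin : ∀ n, α n ≤ 1)
    (hC1 : 1 ≤ C) (hCT' : C ≤ T') (hT'T : T' < T) (hfluid : T + C < 2 * T')
    (hsat : Sat C T' α) :
    ∀ s : ℕ, ∃ j < C + 1, C ≤ ∑ i ∈ Finset.range T, α ((s + j) * T + i) := by
  intro s
  by_contra hcon
  push_neg at hcon
  have hT'pos : 0 < T' := lt_of_lt_of_le hC1 hCT'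
  set S : ℕ → ℕ → ℕ := fun a b => ∑ i ∈ Finset.Ico a b, α i with hSdef
  have hrange : ∀ a L : ℕ, S a (a + L) = ∑ i ∈ Finset.range L, α (a + i) := by
    intro a L
    simp only [hSdef, Finset.sum_Ico_eq_sum_range]
    simp
  have hsla : ∀ q : ℕ, C ≤ S (q * T') (q * T' + T') := by
    intro q
    rw [hrange]
    exact hsat q
  have hI : ∀ j, j < C + 1 → S ((s + j) * T) ((s + j) * T + T) < C := by
    intro j hj; rw [hrange]; exact hcon j hj
  have hsplit : ∀ a b c : ℕ, a ≤ b → b ≤ c → S a c = S a b + S b c :=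
    fun a b c h1 h2 => (Finset.sum_Ico_consecutive _ h1 h2).symm
  have hsub : ∀ a b a' b' : ℕ, a' ≤ a → b ≤ b' → S a b ≤ S a' b' := by
    intro a b a' b' h1 h2
    exact Finset.sum_le_sum_of_subset (Finset.Ico_subset_Ico h1 h2)
  obtain ⟨Q0, hQ0a, hQ0b⟩ : ∃ q, s * T ≤ q * T' ∧ q * T' < s * T + T' := by
    refine ⟨(s * T + T' - 1) / T', ?_, ?_⟩ <;>
    · have h2 := Nat.div_add_mod (s * T + T' - 1) T'
      have h3 : (s * T + T' - 1) % T' < T' := Nat.mod_lt _ hT'pos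
      rw [Nat.mul_comm] at h2
      omega
  have key : ∀ j, j ≤ C →
      (s + j) * T ≤ (Q0 + j) * T' ∧ (Q0 + j) * T' < (s + j) * T + T' ∧
      j ≤ S ((s + j) * T) ((Q0 + j) * T') := by
    intro j
    induction j with
    | zero => intro _; exact ⟨by simpa using hQ0a, by simpa using hQ0b, Nat.zero_le _⟩
    | succ j ih =>
      intro hj
      obtain ⟨h1, h2, h3⟩ := ih (Nat.le_of_succ_le hj)
      have eT : (s + (j + 1)) * T = (s + j) * T + T := by ring
      have eT' : (Q0 + (j + 1)) * T' = (Q0 + j) * T' + T' := by ring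
      have hqlt : (Q0 + j) * T' ≤ (s + j) * T + T := by omega
      have hIj := hI j (by omega)
      have hslaj := hsla (Q0 + j)
      -- the T'-interval starting at (Q0+j)*T' must spill into the next T-interval
      have hge : (s + j) * T + T ≤ (Q0 + j) * T' + T' := by
        by_contra hlt
        push_neg at hlt
        have := hsub ((Q0 + j) * T') ((Q0 + j) * T' + T') ((s + j) * T)
          ((s + j) * T + T) h1 (le_of_lt hlt)
        omega
      have ebody := hsplit ((s + j) * T) ((Q0 + j) * T') ((s + j) * T + T) h1 hqlt
      have esla := hsplit ((Q0 + j) * T') ((s + j) * T + T) ((Q0 + j) * T' + T')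
        hqlt hge
      refine ⟨?_, ?_, ?_⟩
      · omega
      · omega
      · rw [eT, eT']
        omega
  obtain ⟨h1, h2, h3⟩ := key C le_rfl
  have hIC := hI C (by omega)
  have hqle : (Q0 + C) * T' ≤ (s + C) * T + T := by omega
  have := hsplit ((s + C) * T) ((Q0 + C) * T') ((s + C) * T + T) h1 hqle
  omega
end

section
/- If (C,T,D,W) is a subtype of (C,T,D',W') (i.e., every schedule satisfying the first satisfies the second), then D/W ≤ D'/W', i.e., D·W' ≤ D'·W. -/
/-- Indicator: interval [m, m+T−1] receives at least C units. -/
def A (C T : ℕ) (α : ℕ → ℕ) (m : ℕ) : ℕ :=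
  if C ≤ ∑ i ∈ Finset.range T, α (m + i) then 1 else 0

/-- α satisfies SLA (C,T,D,W). -/
def SatW (C T D W : ℕ) (α : ℕ → ℕ) : Prop :=
  ∀ Q : ℕ, W - D ≤ ∑ j ∈ Finset.range W, A C T α (Q * (W * T) + j * T)

lemma sum_ind (n m : ℕ) : ∑ j ∈ Finset.range n, (if j < m then (1:ℕ) else 0) = min m n := by
  induction n with
  | zero => simp
  | succ n ih => rw [Finset.sum_range_succ, ih]; split_ifs <;> omega

lemma sum_blocks (g : ℕ → ℕ) (a b : ℕ) :
    ∑ n ∈ Finset.range (a * b), g n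
      = ∑ i ∈ Finset.range a, ∑ j ∈ Finset.range b, g (i * b + j) := by
  induction a with
  | zero => simp
  | succ a ih =>
    rw [Finset.sum_range_succ, ← ih, Nat.succ_mul, Finset.sum_range_add]

/-- subtyping (C,T,D,W) ⊲ (C,T,D',W') implies D·W' ≤ D'·W. -/
theorem stmt_10 (C T D W D' W' : ℕ)
    (hC1 : 1 ≤ C) (hCT : C ≤ T) (hDW : D ≤ W) (hD'W' : D' ≤ W')
    (hW : 1 ≤ W) (hW' : 1 ≤ W')
    (hsub : ∀ α : ℕ → ℕ, (∀ n, α n ≤ 1) → SatW C T D W α → SatW C T D' W' α) :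
    D * W' ≤ D' * W := by
  have hT : 1 ≤ T := le_trans hC1 hCT
  set α : ℕ → ℕ := fun n => if n / T % W < W - D then 1 else 0 with hαdef
  have hα1 : ∀ n, α n ≤ 1 := by
    intro n; simp only [hαdef]; split <;> simp
  have hA : ∀ k, A C T α (k * T) = if k % W < W - D then 1 else 0 := by
    intro k
    unfold A
    have hsum : ∑ i ∈ Finset.range T, α (k * T + i)
        = if k % W < W - D then T else 0 := by
      have h1 : ∀ i ∈ Finset.range T, α (k * T + i) = if k % W < W - D then 1 else 0 := by
        intro i hi
        simp only [Finset.mem_range] at hi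
        have : (k * T + i) / T = k := by
          rw [mul_comm, Nat.mul_add_div (by omega), Nat.div_eq_of_lt hi, add_zero]
        simp only [hαdef, this]
      rw [Finset.sum_congr rfl h1]
      split <;> simp
    rw [hsum]
    split_ifs <;> omega
  have hsat : SatW C T D W α := by
    intro Q
    have h1 : ∀ j ∈ Finset.range W, A C T α (Q * (W * T) + j * T)
        = if j < W - D then 1 else 0 := by
      intro j hj
      simp only [Finset.mem_range] at hj
      have he : Q * (W * T) + j * T = (Q * W + j) * T := by ring
      rw [he, hA, Nat.mul_add_mod', Nat.mod_eq_of_lt hj]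
    rw [Finset.sum_congr rfl h1, sum_ind]
    omega
  have hsat' : SatW C T D' W' α := hsub α hα1 hsat
  -- rewrite hsat' in terms of g
  set g : ℕ → ℕ := fun n => if n % W < W - D then 1 else 0 with hgdef
  have hgrp : ∀ Q, W' - D' ≤ ∑ j ∈ Finset.range W', g (Q * W' + j) := by
    intro Q
    have h1 : ∀ j ∈ Finset.range W', A C T α (Q * (W' * T) + j * T) = g (Q * W' + j) := by
      intro j hj
      have he : Q * (W' * T) + j * T = (Q * W' + j) * T := by ring
      rw [he, hA]
    have := hsat' Q
    rwa [Finset.sum_congr rfl h1] at this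
  -- total count of good windows in [0, W*W')
  have htot : ∑ n ∈ Finset.range (W * W'), g n = W' * (W - D) := by
    rw [mul_comm, sum_blocks]
    have h1 : ∀ i ∈ Finset.range W', ∑ j ∈ Finset.range W, g (i * W + j) = W - D := by
      intro i hi
      have h2 : ∀ j ∈ Finset.range W, g (i * W + j) = if j < W - D then 1 else 0 := by
        intro j hj
        simp only [Finset.mem_range] at hj
        simp only [hgdef, Nat.mul_add_mod', Nat.mod_eq_of_lt hj]
      rw [Finset.sum_congr rfl h2, sum_ind]
      omega
    rw [Finset.sum_congr rfl h1, Finset.sum_const, Finset.card_range, smul_eq_mul]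
  have hle : W * (W' - D') ≤ W' * (W - D) := by
    rw [← htot, sum_blocks]
    calc W * (W' - D') = ∑ _i ∈ Finset.range W, (W' - D') := by
          rw [Finset.sum_const, Finset.card_range, smul_eq_mul]
      _ ≤ ∑ i ∈ Finset.range W, ∑ j ∈ Finset.range W', g (i * W' + j) :=
          Finset.sum_le_sum fun i _ => hgrp i
  have e1 : W * (W' - D') = W * W' - W * D' := Nat.mul_sub ..
  have e2 : W' * (W - D) = W * W' - W' * D := by rw [Nat.mul_sub, mul_comm W' W]
  rw [e1, e2] at hle
  have hDWW : W' * D ≤ W * W' := by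
    rw [mul_comm W W']
    exact Nat.mul_le_mul_left _ hDW
  have := (tsub_le_tsub_iff_left hDWW).mp hle
  calc D * W' = W' * D := mul_comm ..
    _ ≤ W * D' := this
    _ = D' * W := mul_comm ..
end

section
/- Every schedule satisfying SLA (C,T,D,W) also satisfies SLA (C,T,D',W') whenever D·W' ≤ D'·W and W' is a multiple of W (sufficient condition for subtyping with identical C and T). -/
/-- if W ∣ W' and D·W' ≤ D'·W then every schedule satisfying
(C,T,D,W) satisfies (C,T,D',W'). -/
theorem stmt_11 (C T D W D' W' : ℕ)
    (hC1 : 1 ≤ C) (hCT : C ≤ T) (hDW : D ≤ W) (hD'W' : D' ≤ W')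
    (hW : 1 ≤ W) (hdvd : W ∣ W') (hratio : D * W' ≤ D' * W) :
    ∀ α : ℕ → ℕ, (∀ n, α n ≤ 1) → SatW C T D W α → SatW C T D' W' α := by
  intro α hα hsat
  obtain ⟨k, hk⟩ := hdvd
  subst hk
  intro Q
  have key : ∀ b : ℕ,
      b * (W - D) ≤ ∑ j ∈ Finset.range (b * W), A C T α (Q * (W * k * T) + j * T) := by
    intro b
    induction b with
    | zero => simp
    | succ b ih =>
      rw [Nat.succ_mul, Nat.succ_mul, Finset.sum_range_add]
      have h2 : W - D ≤ ∑ r ∈ Finset.range W, A C T α (Q * (W * k * T) + (b * W + r) * T) := by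
        calc W - D ≤ ∑ r ∈ Finset.range W, A C T α ((Q * k + b) * (W * T) + r * T) :=
              hsat (Q * k + b)
          _ = _ := Finset.sum_congr rfl fun r _ => by
              rw [show (Q * k + b) * (W * T) + r * T = Q * (W * k * T) + (b * W + r) * T by ring]
      exact Nat.add_le_add ih h2
  have hkey := key k
  rw [Nat.mul_comm k W] at hkey
  have hD : D * k ≤ D' := by
    have h1 : D * k * W ≤ D' * W := by
      rw [show D * k * W = D * (W * k) by ring]; exact hratio
    exact Nat.le_of_mul_le_mul_right h1 hW
  have e : k * (W - D) + k * D = k * W := by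
    rw [← Nat.mul_add, Nat.sub_add_cancel hDW]
  have c1 : k * D = D * k := Nat.mul_comm k D
  have c2 : k * W = W * k := Nat.mul_comm k W
  have : W * k - D' ≤ k * (W - D) := by omega
  exact this.trans hkey
end

section
/- There exists a schedule α : ℕ → {0,1} that satisfies SLA (1,4) (one unit allocated in every aligned interval of length 4) but does not satisfy SLA (1,5); hence (1,4) is not a subtype of (1,5) despite having a higher utilization (1/4 > 1/5). -/
/-- some schedule satisfies (1,4) but not (1,5): ¬((1,4) ⊲ (1,5)). -/
theorem stmt_17 : ∃ α : ℕ → ℕ, (∀ n, α n ≤ 1) ∧ Sat 1 4 α ∧ ¬ Sat 1 5 α := by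
  refine ⟨fun n => if n % 8 = 3 ∨ n % 8 = 4 then 1 else 0, ?_, ?_, ?_⟩
  · intro n; dsimp only; split <;> simp
  · intro Q
    simp only [Finset.sum_apply, ge_iff_le]
    rcases Nat.even_or_odd Q with ⟨k, hk⟩ | ⟨k, hk⟩
    · have h3 : (Q * 4 + 3) % 8 = 3 := by omega
      simp
      exact ⟨3, by simp [h3]⟩
    · have h0 : (Q * 4 + 0) % 8 = 4 := by omega
      simp
      exact ⟨0, by simp; omega⟩
  · intro h
    have := h 1
    simp [Finset.sum_range_succ] at this
    obtain ⟨x, hx⟩ := this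
    simp [Finset.mem_filter, Finset.mem_range] at hx
    omega
end

section
/- If T ≤ T'/2 with K = ⌊T'/T⌋, and a schedule α satisfies (C,T), then for every start s ∈ ℕ (not necessarily a multiple of T'), the sum of α over [s, s+T'−1] is at least (K−1)·C. -/
lemma blocks_sum_s18 (C T : ℕ) (α : ℕ → ℕ) (hsat : Sat C T α) :
    ∀ m q : ℕ, m * C ≤ ∑ n ∈ Finset.Ico (q * T) ((q + m) * T), α n := by
  intro m
  induction m with
  | zero => intro q; simp
  | succ m ih =>
    intro q
    have hsplit : ∑ n ∈ Finset.Ico (q * T) ((q + m) * T), α n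
        + ∑ n ∈ Finset.Ico ((q + m) * T) ((q + m + 1) * T), α n
        = ∑ n ∈ Finset.Ico (q * T) ((q + (m + 1)) * T), α n := by
      rw [Finset.sum_Ico_consecutive]
      · ring_nf
      · exact Nat.mul_le_mul_right T (Nat.le_add_right q m)
      · exact Nat.mul_le_mul_right T (by omega)
    have hblock : C ≤ ∑ n ∈ Finset.Ico ((q + m) * T) ((q + m + 1) * T), α n := by
      have := hsat (q + m)
      rw [Finset.sum_Ico_eq_sum_range]
      have h1 : (q + m + 1) * T - (q + m) * T = T := by ring_nf; omega
      rw [h1]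
      exact this
    calc (m + 1) * C = m * C + C := by ring
    _ ≤ _ := by rw [← hsplit]; exact Nat.add_le_add (ih q) hblock

/-- if 2T ≤ T' and K = ⌊T'/T⌋, a schedule satisfying (C,T) provides
at least (K−1)·C units in every interval [s, s+T'), for arbitrary start s. -/
theorem stmt_18 (C T T' K : ℕ) (α : ℕ → ℕ) (hbin : ∀ n, α n ≤ 1)
    (hC1 : 1 ≤ C) (hCT : C ≤ T) (hT : 1 ≤ T) (hhalf : 2 * T ≤ T')
    (hK : K = T' / T) (hsat : Sat C T α) :
    ∀ s : ℕ, (K - 1) * C ≤ ∑ i ∈ Finset.range T', α (s + i) := by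
  intro s
  have hK2 : 2 ≤ K := by
    rw [hK]
    calc 2 = 2 * T / T := by rw [Nat.mul_div_cancel _ (by omega)]
    _ ≤ T' / T := Nat.div_le_div_right hhalf
  set q := s / T + 1 with hq
  have hq1 : s ≤ q * T := by
    have h1 : s % T < T := Nat.mod_lt s (by omega)
    have h2 : s / T * T + s % T = s := by rw [Nat.mul_comm]; exact Nat.div_add_mod s T
    have : q * T = s / T * T + T := by rw [hq]; ring
    omega
  have hq2 : (q + (K - 1)) * T ≤ s + T' := by
    have h1 : s / T * T ≤ s := Nat.div_mul_le_self s T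
    have h2 : K * T ≤ T' := by rw [hK]; exact Nat.div_mul_le_self T' T
    have : (q + (K - 1)) * T = s / T * T + K * T := by
      have : q + (K - 1) = s / T + K := by omega
      rw [this]; ring
    omega
  have hsum : ∑ i ∈ Finset.range T', α (s + i) = ∑ n ∈ Finset.Ico s (s + T'), α n := by
    rw [Finset.sum_Ico_eq_sum_range]
    simp
  rw [hsum]
  calc (K - 1) * C ≤ ∑ n ∈ Finset.Ico (q * T) ((q + (K - 1)) * T), α n :=
        blocks_sum_s18 C T α hsat (K - 1) q
  _ ≤ ∑ n ∈ Finset.Ico s (s + T'), α n := by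
      apply Finset.sum_le_sum_of_subset
      apply Finset.Ico_subset_Ico hq1 hq2
end
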